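/- Let E be a metric space with the Heine–Borel property (closed bounded sets are compact) and {y_k} a sequence in E that is Cauchy with respect to the metric d̃(x, y) := Σ_{n=1}^∞ 2^{-n} |d(x, x_n)/(1 + d(x, x_n)) − d(y, x_n)/(1 + d(y, x_n))| (for {x_n} dense in E). Then either {y_k} converges in E with respect to d, or d(y_k, y) → ∞ for every y ∈ E. -/

import Mathlib

/-- The totally bounded metric built from a countable dense sequence `xs`. -/
noncomputable def dtilde {E : Type*} [MetricSpace E] (xs : ℕ → E) (x y : E) : ℝ :=
  ∑' n : ℕ, (1/2 : ℝ)^(n+1) *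
    |dist x (xs n) / (1 + dist x (xs n)) - dist y (xs n) / (1 + dist y (xs n))|

section aux

variable {E : Type*} [MetricSpace E] (xs : ℕ → E)

private noncomputable def fF (xs : ℕ → E) (n : ℕ) (x : E) : ℝ :=
  dist x (xs n) / (1 + dist x (xs n))

private lemma g_mono {a b : ℝ} (ha : 0 ≤ a) (hab : a ≤ b) :
    a / (1 + a) ≤ b / (1 + b) := by
  rw [div_le_div_iff₀ (by linarith) (by linarith)]
  nlinarith

private lemma fF_nonneg (n : ℕ) (x : E) : 0 ≤ fF xs n x := by
  have := dist_nonneg (x := x) (y := xs n)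
  exact div_nonneg this (by linarith)

private lemma fF_le_one (n : ℕ) (x : E) : fF xs n x ≤ 1 := by
  have := dist_nonneg (x := x) (y := xs n)
  rw [fF, div_le_one (by linarith)]; linarith

private lemma abs_fF_le (n : ℕ) (x z : E) : |fF xs n x - fF xs n z| ≤ 1 := by
  have h1 := fF_nonneg xs n x
  have h2 := fF_nonneg xs n z
  have h3 := fF_le_one xs n x
  have h4 := fF_le_one xs n z
  rw [abs_le]; constructor <;> linarith

private lemma summable_aux (x z : E) :
    Summable (fun n : ℕ => (1/2 : ℝ)^(n+1) * |fF xs n x - fF xs n z|) := by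
  refine Summable.of_nonneg_of_le (fun n => by positivity) (fun n => ?_)
    ((summable_geometric_of_lt_one (r := (1/2:ℝ)) (by norm_num) (by norm_num)).comp_injective
      (add_left_injective 1))
  calc (1/2 : ℝ)^(n+1) * |fF xs n x - fF xs n z| ≤ (1/2 : ℝ)^(n+1) * 1 := by
        apply mul_le_mul_of_nonneg_left (abs_fF_le xs n x z) (by positivity)
    _ = (1/2 : ℝ)^(n+1) := by ring

private lemma dtilde_eq (x z : E) :
    dtilde xs x z = ∑' n : ℕ, (1/2 : ℝ)^(n+1) * |fF xs n x - fF xs n z| := rfl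

private lemma tsum_half_pow : (∑' n : ℕ, (1/2 : ℝ)^(n+1)) = 1 := by
  have : (fun n : ℕ => (1/2 : ℝ)^(n+1)) = fun n : ℕ => (1/2 : ℝ) * (1/2)^n := by
    funext n; ring
  rw [this, tsum_mul_left, tsum_geometric_two]; norm_num

private lemma fF_lipschitz (n : ℕ) (x z : E) :
    |fF xs n x - fF xs n z| ≤ dist x z := by
  set a := dist x (xs n) with ha
  set b := dist z (xs n) with hb
  have h0a : (0:ℝ) ≤ a := dist_nonneg
  have h0b : (0:ℝ) ≤ b := dist_nonneg
  have key : |a / (1 + a) - b / (1 + b)| ≤ |a - b| := by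
    rw [div_sub_div _ _ (by linarith : (1:ℝ)+a ≠ 0) (by linarith : (1:ℝ)+b ≠ 0)]
    have : a * (1 + b) - (1 + a) * b = a - b := by ring
    rw [this, abs_div]
    have hd : |(1 + a) * (1 + b)| = (1+a)*(1+b) := abs_of_pos (by nlinarith)
    rw [hd]
    calc |a - b| / ((1+a)*(1+b)) ≤ |a - b| / 1 :=
          div_le_div_of_nonneg_left (abs_nonneg _) (by norm_num) (by nlinarith)
      _ = |a - b| := by ring
  refine key.trans ?_
  have := abs_dist_sub_le x z (xs n)
  simpa [ha, hb] using this

private lemma dtilde_le_dist (x z : E) : dtilde xs x z ≤ dist x z := by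
  rw [dtilde_eq]
  have h1 : (∑' n : ℕ, (1/2 : ℝ)^(n+1) * |fF xs n x - fF xs n z|)
      ≤ ∑' n : ℕ, (1/2 : ℝ)^(n+1) * dist x z := by
    apply Summable.tsum_le_tsum _ (summable_aux xs x z)
    · exact ((summable_geometric_of_lt_one (by norm_num) (by norm_num)).comp_injective
        (add_left_injective 1)).mul_right _
    · intro n
      exact mul_le_mul_of_nonneg_left (fF_lipschitz xs n x z) (by positivity)
  rw [tsum_mul_right, tsum_half_pow, one_mul] at h1
  exact h1

private lemma term_le_dtilde (n : ℕ) (x z : E) :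
    (1/2 : ℝ)^(n+1) * |fF xs n x - fF xs n z| ≤ dtilde xs x z := by
  rw [dtilde_eq]
  exact Summable.le_tsum (summable_aux xs x z) n (fun m _ => by positivity)

private lemma dtilde_triangle (a b c : E) :
    dtilde xs a c ≤ dtilde xs a b + dtilde xs b c := by
  rw [dtilde_eq, dtilde_eq, dtilde_eq, ← Summable.tsum_add (summable_aux xs a b) (summable_aux xs b c)]
  apply Summable.tsum_le_tsum _ (summable_aux xs a c)
    ((summable_aux xs a b).add (summable_aux xs b c))
  intro n
  have h := abs_sub_le (fF xs n a) (fF xs n b) (fF xs n c)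
  nlinarith [pow_pos (by norm_num : (0:ℝ) < 1/2) (n+1), abs_nonneg (fF xs n a - fF xs n b),
    abs_nonneg (fF xs n b - fF xs n c)]

end aux

/-- in a metric space with the Heine–Borel property (closed bounded
sets are compact, i.e. a proper space), any sequence which is Cauchy for `d̃`
either converges in `E`, or escapes to infinity: `d(y_k, y) → ∞` for every `y`. -/
theorem stmt4 {E : Type*} [MetricSpace E] [ProperSpace E]
    (xs : ℕ → E) (hxs : DenseRange xs) (y : ℕ → E)
    (hCauchy : ∀ ε > (0:ℝ), ∃ N, ∀ j ≥ N, ∀ k ≥ N, dtilde xs (y j) (y k) < ε) :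
    (∃ z : E, Filter.Tendsto y Filter.atTop (nhds z)) ∨
      (∀ z : E, Filter.Tendsto (fun k => dist (y k) z) Filter.atTop Filter.atTop) := by
  by_cases hesc : ∀ z : E, Filter.Tendsto (fun k => dist (y k) z) Filter.atTop Filter.atTop
  · exact Or.inr hesc
  left
  push_neg at hesc
  obtain ⟨z, hz⟩ := hesc
  -- extract a subsequence in a closed ball
  rw [Filter.tendsto_atTop] at hz
  push_neg at hz
  obtain ⟨b, hb⟩ := hz
  have hb' : ∃ᶠ k in Filter.atTop, dist (y k) z ≤ b := by
    apply hb.mono; intro k hk; exact hk.le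
  obtain ⟨φ, hφmono, hφ⟩ := Filter.extraction_of_frequently_atTop hb'
  have hcomp : IsCompact (Metric.closedBall z b) := isCompact_closedBall z b
  have hmem : ∀ n, (y ∘ φ) n ∈ Metric.closedBall z b := fun n => by
    simp [Metric.mem_closedBall, hφ n]
  obtain ⟨z₀, _, ψ, hψmono, hψ⟩ := hcomp.tendsto_subseq hmem
  -- σ := φ ∘ ψ : strict mono, y ∘ σ → z₀ in d
  set σ : ℕ → ℕ := φ ∘ ψ with hσ
  have hσmono : StrictMono σ := hφmono.comp hψmono
  have hconv : Filter.Tendsto (y ∘ σ) Filter.atTop (nhds z₀) := hψ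
  -- whole sequence tends to z₀ in dtilde
  have hdt : ∀ δ > (0:ℝ), ∃ N, ∀ k ≥ N, dtilde xs (y k) z₀ < δ := by
    intro δ hδ
    obtain ⟨N₁, hN₁⟩ := hCauchy (δ/2) (by linarith)
    -- pick i with σ i ≥ N₁ and dist (y (σ i)) z₀ < δ/2
    have hconv' := Metric.tendsto_atTop.mp hconv (δ/2) (by linarith)
    obtain ⟨M, hM⟩ := hconv'
    set i := max M N₁ with hi
    have hσi : σ i ≥ N₁ := le_trans (le_max_right M N₁) (hσmono.le_apply)
    have hdisti : dist (y (σ i)) z₀ < δ/2 := hM i (le_max_left M N₁)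
    refine ⟨N₁, fun k hk => ?_⟩
    have h1 := dtilde_triangle xs (y k) (y (σ i)) z₀
    have h2 := hN₁ k hk (σ i) hσi
    have h3 : dtilde xs (y (σ i)) z₀ < δ/2 :=
      lt_of_le_of_lt (dtilde_le_dist xs _ _) hdisti
    linarith
  -- conclude d-convergence
  refine ⟨z₀, Metric.tendsto_atTop.mpr ?_⟩
  intro ε hε
  obtain ⟨n, hn⟩ := hxs.exists_dist_lt z₀ (show (0:ℝ) < ε/3 by linarith)
  have hn' : dist (xs n) z₀ < ε/3 := by rw [dist_comm]; exact hn
  have hcpos : 0 < (2*ε/3) / (1 + 2*ε/3) - (ε/3) / (1 + ε/3) := by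
    rw [sub_pos, div_lt_div_iff₀ (by linarith) (by linarith)]
    nlinarith
  obtain ⟨N, hN⟩ := hdt ((1/2 : ℝ)^(n+1) * ((2*ε/3) / (1 + 2*ε/3) - (ε/3) / (1 + ε/3)))
    (mul_pos (by positivity) hcpos)
  refine ⟨N, fun k hk => ?_⟩
  by_contra hcon
  push_neg at hcon
  have hd1 : dist (y k) (xs n) ≥ 2*ε/3 := by
    have := dist_triangle (y k) (xs n) z₀
    linarith
  have hf1 : fF xs n (y k) ≥ (2*ε/3) / (1 + 2*ε/3) := g_mono (by linarith) hd1
  have hf2 : fF xs n z₀ ≤ (ε/3) / (1 + ε/3) := g_mono dist_nonneg hn.le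
  have hgap : |fF xs n (y k) - fF xs n z₀| ≥ (2*ε/3) / (1 + 2*ε/3) - (ε/3) / (1 + ε/3) := by
    rw [abs_of_nonneg (by linarith)]
    linarith
  have hkey : (1/2 : ℝ)^(n+1) * ((2*ε/3) / (1 + 2*ε/3) - (ε/3) / (1 + ε/3))
      ≤ dtilde xs (y k) z₀ :=
    le_trans (mul_le_mul_of_nonneg_left hgap (by positivity))
      (term_le_dtilde xs n (y k) z₀)
  have hlt := hN k hk
  linarith
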